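/- Let A be an associative algebra over a field k with a nonnegative filtration whose associated graded algebra is a commutative domain. Then every inner automorphism of A of finite order n, where k contains a primitive n-th root of unity and n > 1, must be the identity. Equivalently: a nontrivial finite-order automorphism of A (diagonalizable over k) cannot be inner. -/

import Mathlib

section Aux

variable {k A : Type*} [Field k] [Ring A] [Algebra k A]

/-- Eigenvector lemma: a non-identity finite-order automorphism with a primitive root
of unity in the base field has an eigenvector with eigenvalue `≠ 1`. -/
theorem fixed_ring_aux_eigen (φ : A ≃ₐ[k] A) (n : ℕ) (hn : 0 < n) (hord : φ ^ n = 1)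
    (ζ : k) (hζ : IsPrimitiveRoot ζ n) (hnk : (n : k) ≠ 0)
    (a : A) (ha : φ a ≠ a) :
    ∃ y : A, y ≠ 0 ∧ ∃ c : k, c ≠ 1 ∧ φ y = c • y := by
  classical
  set f : ℕ → A := fun t => (φ ^ t) a with hf
  have hfsucc : ∀ t, φ (f t) = f (t + 1) := by
    intro t
    simp only [hf, pow_succ' φ t, AlgEquiv.mul_apply]
  have hfn : f n = a := by simp only [hf, hord, AlgEquiv.one_apply]
  set y : k → A := fun c => ∑ t ∈ Finset.range n, c ^ (n - 1 - t) • f t with hy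
  -- each y c is an eigenvector (possibly zero) with eigenvalue c
  have heig : ∀ c : k, c ^ n = 1 → φ (y c) = c • y c := by
    intro c hc
    have hS : ∑ t ∈ Finset.range (n + 1), c ^ (n - t) • f t
        = (∑ t ∈ Finset.range n, c ^ (n - t) • f t) + c ^ (n - n) • f n :=
      Finset.sum_range_succ _ n
    have hS' : ∑ t ∈ Finset.range (n + 1), c ^ (n - t) • f t
        = (∑ t ∈ Finset.range n, c ^ (n - (t + 1)) • f (t + 1)) + c ^ (n - 0) • f 0 :=
      Finset.sum_range_succ' _ n
    have h1 : φ (y c) = ∑ t ∈ Finset.range n, c ^ (n - (t + 1)) • f (t + 1) := by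
      simp only [hy, map_sum, map_smul]
      refine Finset.sum_congr rfl fun t ht => ?_
      rw [hfsucc]
      congr 2
      omega
    have h2 : c • y c = ∑ t ∈ Finset.range n, c ^ (n - t) • f t := by
      simp only [hy, Finset.smul_sum, smul_smul]
      refine Finset.sum_congr rfl fun t ht => ?_
      simp only [Finset.mem_range] at ht
      congr 1
      rw [← pow_succ']
      congr 1
      omega
    have hend : c ^ (n - n) • f n = c ^ (n - 0) • f 0 := by
      rw [hfn]; simp [hc, hf]
    rw [h1, h2]
    have := hS.symm.trans hS'
    rw [hend] at this
    exact (add_right_cancel this).symm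
  -- sum of all eigencomponents
  have hsum : ∑ s ∈ Finset.range n, y (ζ ^ s) = (n : k) • f (n - 1) := by
    simp only [hy]
    rw [Finset.sum_comm]
    have hterm : ∀ t ∈ Finset.range n,
        ∑ s ∈ Finset.range n, (ζ ^ s) ^ (n - 1 - t) • f t
          = (if t = n - 1 then (n : k) else 0) • f t := by
      intro t ht
      simp only [Finset.mem_range] at ht
      rw [← Finset.sum_smul]
      congr 1
      have hrw : ∀ s, (ζ ^ s) ^ (n - 1 - t) = (ζ ^ (n - 1 - t)) ^ s := by
        intro s; rw [← pow_mul, ← pow_mul, Nat.mul_comm]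
      simp only [hrw]
      by_cases htn : t = n - 1
      · subst htn
        simp
      · rw [if_neg htn]
        have hw : ζ ^ (n - 1 - t) ≠ 1 :=
          hζ.pow_ne_one_of_pos_of_lt (by omega) (by omega)
        rw [geom_sum_eq hw]
        have : (ζ ^ (n - 1 - t)) ^ n = 1 := by
          rw [← pow_mul, Nat.mul_comm, pow_mul, hζ.pow_eq_one, one_pow]
        rw [this, sub_self, zero_div]
    rw [Finset.sum_congr rfl hterm, Finset.sum_eq_single (n - 1)]
    · rw [if_pos rfl]
    · intro s _ hsne; rw [if_neg hsne, zero_smul]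
    · intro h; exact absurd (Finset.mem_range.mpr (by omega)) h
  by_cases hex : ∃ s ∈ Finset.range n, s ≠ 0 ∧ y (ζ ^ s) ≠ 0
  · obtain ⟨s, hs, hs0, hys⟩ := hex
    simp only [Finset.mem_range] at hs
    exact ⟨y (ζ ^ s), hys, ζ ^ s,
      hζ.pow_ne_one_of_pos_of_lt (by omega) hs,
      heig _ (by rw [← pow_mul, Nat.mul_comm, pow_mul, hζ.pow_eq_one, one_pow])⟩
  · exfalso
    push_neg at hex
    -- all nontrivial eigencomponents vanish, so (n:k) • f (n-1) = y 1 is φ-invariant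
    have hzero : ∀ s ∈ Finset.range n, s ≠ 0 → y (ζ ^ s) = 0 := hex
    have hsum' : ∑ s ∈ Finset.range n, y (ζ ^ s) = y 1 := by
      rw [Finset.sum_eq_single 0]
      · simp
      · intro s hs hs0; exact hzero s hs hs0
      · intro h; exact absurd (Finset.mem_range.mpr hn) h
    have hyinv : φ (y 1) = y 1 := by
      have := heig 1 (one_pow n)
      rwa [one_smul] at this
    have hkey : (n : k) • f (n - 1) = y 1 := by rw [← hsum, hsum']
    have h2 : φ ((n : k) • f (n - 1)) = (n : k) • f (n - 1) := by
      rw [hkey, hyinv]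
    rw [map_smul, hfsucc] at h2
    have hn1 : n - 1 + 1 = n := by omega
    rw [hn1, hfn] at h2
    have := smul_right_injective A hnk h2
    have hfa : f (n - 1) = a := this.symm
    apply ha
    calc φ a = φ (f (n - 1)) := by rw [hfa]
      _ = f (n - 1 + 1) := hfsucc _
      _ = a := by rw [hn1, hfn]

end Aux

/-- Let `A` be an associative algebra over a field `k` with a nonnegative
exhaustive filtration whose associated graded algebra is a commutative domain (encoded as in
the leading-symbol conditions below).  Then every inner automorphism of `A` of finite order
`n`, where `k` contains a primitive `n`-th root of unity, must be the identity. -/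
theorem fixed_ring_stmt_6 (k A : Type*) [Field k] [Ring A] [Algebra k A]
    (F : ℤ → Submodule k A)
    (hneg : ∀ n : ℤ, n < 0 → F n = ⊥)
    (hmono : Monotone F)
    (hone : (1 : A) ∈ F 0)
    (hmul : ∀ i j : ℤ, ∀ x ∈ F i, ∀ y ∈ F j, x * y ∈ F (i + j))
    (hexh : ∀ a : A, ∃ i : ℤ, a ∈ F i)
    (hgrdom : ∀ i j : ℤ, ∀ x y : A, x ∈ F i → x ∉ F (i - 1) → y ∈ F j → y ∉ F (j - 1) →
      x * y ∉ F (i + j - 1))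
    (hgrcomm : ∀ i j : ℤ, ∀ x y : A, x ∈ F i → y ∈ F j → x * y - y * x ∈ F (i + j - 1))
    (φ : A ≃ₐ[k] A) (u : Aˣ) (hinner : ∀ a : A, φ a = (u : A) * a * (↑u⁻¹ : A))
    (n : ℕ) (hn : 0 < n) (hord : φ ^ n = 1)
    (ζ : k) (hζ : IsPrimitiveRoot ζ n) :
    φ = AlgEquiv.refl := by
  classical
  rcases subsingleton_or_nontrivial A with hA | hA
  · ext a; exact Subsingleton.elim _ _
  -- minimal degree function
  have hdeg : ∀ a : A, a ≠ 0 → ∃ j : ℤ, a ∈ F j ∧ a ∉ F (j - 1) := by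
    intro a ha
    have hbdd : ∃ b : ℤ, ∀ z : ℤ, a ∈ F z → b ≤ z := by
      refine ⟨0, fun z hz => ?_⟩
      by_contra hlt
      push_neg at hlt
      rw [hneg z hlt] at hz
      exact ha (Submodule.mem_bot k |>.mp hz)
    obtain ⟨lb, hlb, hmin⟩ := Int.exists_least_of_bdd hbdd (hexh a)
    refine ⟨lb, hlb, fun hcon => ?_⟩
    have := hmin _ hcon
    omega
  -- degree of u and u⁻¹
  have hu0 : (u : A) ≠ 0 := Units.ne_zero u
  have hui0 : ((↑u⁻¹ : A)) ≠ 0 := Units.ne_zero u⁻¹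
  obtain ⟨i, hui, hui'⟩ := hdeg (u : A) hu0
  obtain ⟨m, hvm, hvm'⟩ := hdeg (↑u⁻¹ : A) hui0
  have huv : (u : A) * (↑u⁻¹ : A) = 1 := u.mul_inv
  have hone' : (1 : A) ∉ F (-1) := by
    rw [hneg (-1) (by omega)]
    simp
  have him : i + m = 0 := by
    have h1 : (1 : A) ∉ F (i + m - 1) := by
      rw [← huv]; exact hgrdom i m _ _ hui hui' hvm hvm'
    have h2 : (1 : A) ∈ F (i + m) := by rw [← huv]; exact hmul i m _ hui _ hvm
    by_contra hne
    rcases lt_or_gt_of_ne hne with hlt | hgt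
    · have : F (i + m) ≤ F (-1) := hmono (by omega)
      exact hone' (this h2)
    · have : F 0 ≤ F (i + m - 1) := hmono (by omega)
      exact h1 (this hone)
  -- key filtration estimate
  have hkey : ∀ j : ℤ, ∀ a ∈ F j, φ a - a ∈ F (j - 1) := by
    intro j a haj
    have heq : φ a - a = ((u : A) * a - a * (u : A)) * (↑u⁻¹ : A) := by
      rw [hinner a, sub_mul, mul_assoc, mul_assoc, huv, mul_one]
    have h1 : (u : A) * a - a * (u : A) ∈ F (i + j - 1) := hgrcomm i j _ _ hui haj
    have h2 : ((u : A) * a - a * (u : A)) * (↑u⁻¹ : A) ∈ F (i + j - 1 + m) :=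
      hmul _ _ _ h1 _ hvm
    have : i + j - 1 + m = j - 1 := by omega
    rw [this] at h2
    rwa [heq]
  -- now finish: suppose φ ≠ refl
  by_contra hne
  have hex : ∃ a : A, φ a ≠ a := by
    by_contra hall
    push_neg at hall
    exact hne (AlgEquiv.ext hall)
  obtain ⟨a, ha⟩ := hex
  have : NeZero n := ⟨hn.ne'⟩
  have hnk : (n : k) ≠ 0 := (hζ.neZero').out
  obtain ⟨y, hy0, c, hc1, hcy⟩ := fixed_ring_aux_eigen φ n hn hord ζ hζ hnk a ha
  obtain ⟨j, hyj, hyj'⟩ := hdeg y hy0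
  have h1 : φ y - y ∈ F (j - 1) := hkey j y hyj
  have h2 : φ y - y = (c - 1) • y := by rw [hcy, sub_smul, one_smul]
  rw [h2] at h1
  have h3 : y ∈ F (j - 1) := by
    have := (F (j - 1)).smul_mem (c - 1)⁻¹ h1
    rwa [smul_smul, inv_mul_cancel₀ (sub_ne_zero.mpr hc1), one_smul] at this
  exact hyj' h3
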